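/- arXiv:2011.04254 — 2 statements merged into one kernel-verified Lean document; each statement's English description precedes it below -/
import Mathlib

section
/- (Corrected form of Proposition 1, equation for ω.) Let D⁰ = {x⁰₊ₖ, x⁰₋ₖ}ₖ₌₁^K and D¹ = {x¹₊ₖ, x¹₋ₖ}ₖ₌₁^K be two K-shot task datasets, and suppose that at the evaluation point the two logits agree on every sample of both datasets, i.e. (η₀ − η₁)·z̄(x) = 0 for every sample x (so the softmax output is (1/2,1/2) on every sample). Then the gradient with respect to the filter ω of the difference of task losses satisfies, for every entry (a,b) with 0 ≤ a,b ≤ M−1: ∂(L_{D⁰} − L_{D¹})/∂ω_{ab} = (1/(2K)) Σₖ₌₁^K Σ_{l₁=0}^{L−M} Σ_{l₂=0}^{L−M} (η₀ − η₁)_{(l₁,l₂)} · ( (x¹₊ₖ − x⁰₊ₖ) + (x⁰₋ₖ − x¹₋ₖ) )_{(l₁+a)(l₂+b)}. -/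
open scoped InnerProductSpace

/-- Binary softmax, first component. -/
noncomputable def p0 (u0 u1 : ℝ) : ℝ := Real.exp u0 / (Real.exp u0 + Real.exp u1)

/-- Binary softmax, second component. -/
noncomputable def p1 (u0 u1 : ℝ) : ℝ := Real.exp u1 / (Real.exp u0 + Real.exp u1)

/-- Cross-entropy loss ℓ(u; y) = −y₀ log p₀(u) − y₁ log p₁(u), with label (y0, y1)
and logits (u0, u1). -/
noncomputable def xent (y0 y1 u0 u1 : ℝ) : ℝ :=
  -(y0 * Real.log (p0 u0 u1)) - y1 * Real.log (p1 u0 u1)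

/-- The valid index l + a ∈ Fin L, for l ∈ Fin (L−M+1) and a ∈ Fin M with M ≤ L. -/
def idx {L M : ℕ} (hL : M ≤ L) (l : Fin (L - M + 1)) (a : Fin M) : Fin L :=
  ⟨l.val + a.val, by have h1 := l.isLt; have h2 := a.isLt; omega⟩

/-- Row-major flattening of an L×L image, indexed by pairs. -/
def flat {L : ℕ} (x : Fin L → Fin L → ℝ) : EuclideanSpace ℝ (Fin L × Fin L) :=
  WithLp.toLp 2 (fun m => x m.1 m.2)

/-- The sparse Toeplitz matrix D_ω representing the valid convolution with filter ω. -/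
noncomputable def Dmat {L M : ℕ} (hM : 1 ≤ M) (hL : M ≤ L) (ω : Fin M × Fin M → ℝ) :
    Matrix (Fin (L - M + 1) × Fin (L - M + 1)) (Fin L × Fin L) ℝ :=
  fun l m =>
    if h : l.1.val ≤ m.1.val ∧ m.1.val - l.1.val ≤ M - 1 ∧
        l.2.val ≤ m.2.val ∧ m.2.val - l.2.val ≤ M - 1 then
      ω (⟨m.1.val - l.1.val, by omega⟩, ⟨m.2.val - l.2.val, by omega⟩)
    else 0

/-- The flattened feature map z̄(x) = D_ω x̄. -/
noncomputable def zbar {L M : ℕ} (hM : 1 ≤ M) (hL : M ≤ L) (ω : Fin M × Fin M → ℝ)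
    (x : Fin L → Fin L → ℝ) : EuclideanSpace ℝ (Fin (L - M + 1) × Fin (L - M + 1)) :=
  WithLp.toLp 2 ((Dmat hM hL ω).mulVec (flat x))

/-- Task loss of a K-shot dataset with positive samples xp (label (1,0)) and negative
samples xm (label (0,1)): L_D = (1/K) Σₖ ( ℓ(xpₖ; (1,0)) + ℓ(xmₖ; (0,1)) ), where the
logits of a sample x are (η₀·z̄(x), η₁·z̄(x)). -/
noncomputable def taskLoss {L M K : ℕ} (hM : 1 ≤ M) (hL : M ≤ L) (ω : Fin M × Fin M → ℝ)
    (xp xm : Fin K → Fin L → Fin L → ℝ)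
    (η0 η1 : EuclideanSpace ℝ (Fin (L - M + 1) × Fin (L - M + 1))) : ℝ :=
  (1 / (K : ℝ)) * ∑ k : Fin K,
    (xent 1 0 ⟪η0, zbar hM hL ω (xp k)⟫_ℝ ⟪η1, zbar hM hL ω (xp k)⟫_ℝ +
     xent 0 1 ⟪η0, zbar hM hL ω (xm k)⟫_ℝ ⟪η1, zbar hM hL ω (xm k)⟫_ℝ)

open Finset
lemma dmat_mulVec {L M : ℕ} (hM : 1 ≤ M) (hL : M ≤ L) (ω : Fin M × Fin M → ℝ)
    (x : Fin L → Fin L → ℝ) (l : Fin (L - M + 1) × Fin (L - M + 1)) :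
    (Dmat hM hL ω).mulVec (flat x) l
      = ∑ p : Fin M × Fin M, ω p * x (idx hL l.1 p.1) (idx hL l.2 p.2) := by
  classical
  set e : Fin M × Fin M → Fin L × Fin L :=
    fun p => (idx hL l.1 p.1, idx hL l.2 p.2) with he
  have hinj : Function.Injective e := by
    intro p q hpq
    simp only [he, idx, Prod.mk.injEq, Fin.mk.injEq] at hpq
    ext <;> omega
  have hzero : ∀ m ∈ (univ : Finset (Fin L × Fin L)), m ∉ univ.image e →
      Dmat hM hL ω l m * flat x m = 0 := by
    intro m _ hm
    rw [Dmat]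
    split
    case isTrue h =>
      exfalso
      apply hm
      refine mem_image.2 ⟨(⟨m.1.val - l.1.val, by omega⟩, ⟨m.2.val - l.2.val, by omega⟩),
        mem_univ _, ?_⟩
      simp only [he, idx]
      obtain ⟨h1, h2, h3, h4⟩ := h
      refine Prod.ext ?_ ?_ <;> apply Fin.ext <;> simp <;> omega
    case isFalse h => simp
  have hDe : ∀ p : Fin M × Fin M, Dmat hM hL ω l (e p) = ω p := by
    intro p
    have h1 := p.1.isLt; have h2 := p.2.isLt
    have h1' := l.1.isLt; have h2' := l.2.isLt
    rw [Dmat]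
    rw [dif_pos (by simp [he, idx]; omega)]
    congr 1
    refine Prod.ext ?_ ?_ <;> apply Fin.ext <;> simp [he, idx]
  calc (Dmat hM hL ω).mulVec (flat x) l
      = ∑ m, Dmat hM hL ω l m * flat x m := rfl
    _ = ∑ m ∈ univ.image e, Dmat hM hL ω l m * flat x m :=
        (Finset.sum_subset (subset_univ _) hzero).symm
    _ = ∑ p, Dmat hM hL ω l (e p) * flat x (e p) :=
        Finset.sum_image (fun p _ q _ h => hinj h)
    _ = ∑ p : Fin M × Fin M, ω p * x (idx hL l.1 p.1) (idx hL l.2 p.2) := by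
        refine Finset.sum_congr rfl fun p _ => ?_
        rw [hDe p]; rfl

lemma inner_zbar {L M : ℕ} (hM : 1 ≤ M) (hL : M ≤ L) (ω : Fin M × Fin M → ℝ)
    (x : Fin L → Fin L → ℝ)
    (η : EuclideanSpace ℝ (Fin (L - M + 1) × Fin (L - M + 1))) :
    ⟪η, zbar hM hL ω x⟫_ℝ
      = ∑ p : Fin M × Fin M, ω p * ∑ l, η l * x (idx hL l.1 p.1) (idx hL l.2 p.2) := by
  rw [PiLp.inner_apply]
  simp only [RCLike.inner_apply, conj_trivial, zbar, dmat_mulVec hM hL]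
  simp only [Finset.mul_sum, Finset.sum_mul]
  rw [Finset.sum_comm]
  refine Finset.sum_congr rfl fun p _ => Finset.sum_congr rfl fun l _ => by ring


lemma hasDerivAt_inner_zbar {L M : ℕ} (hM : 1 ≤ M) (hL : M ≤ L) (ω : Fin M × Fin M → ℝ)
    (x : Fin L → Fin L → ℝ)
    (η : EuclideanSpace ℝ (Fin (L - M + 1) × Fin (L - M + 1)))
    (q : Fin M × Fin M) (t : ℝ) :
    HasDerivAt (fun s => ⟪η, zbar hM hL (Function.update ω q s) x⟫_ℝ)
      (∑ l, η l * x (idx hL l.1 q.1) (idx hL l.2 q.2)) t := by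
  classical
  set C : Fin M × Fin M → ℝ :=
    fun p => ∑ l, η l * x (idx hL l.1 p.1) (idx hL l.2 p.2) with hC
  have heq : ∀ s, ⟪η, zbar hM hL (Function.update ω q s) x⟫_ℝ
      = s * C q + ∑ p ∈ Finset.univ.erase q, ω p * C p := by
    intro s
    rw [inner_zbar hM hL, ← Finset.add_sum_erase _ _ (Finset.mem_univ q)]
    congr 1
    · rw [Function.update_self]
    · refine Finset.sum_congr rfl fun p hp => ?_
      rw [Function.update_of_ne (Finset.ne_of_mem_erase hp)]
  simp only [heq]
  exact (hasDerivAt_mul_const (C q)).add_const _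

lemma xent10 (u0 u1 : ℝ) :
    xent 1 0 u0 u1 = Real.log (Real.exp u0 + Real.exp u1) - u0 := by
  have hS : (0:ℝ) < Real.exp u0 + Real.exp u1 := by positivity
  unfold xent p0
  rw [Real.log_div (Real.exp_ne_zero _) (ne_of_gt hS), Real.log_exp]
  ring

lemma xent01 (u0 u1 : ℝ) :
    xent 0 1 u0 u1 = Real.log (Real.exp u0 + Real.exp u1) - u1 := by
  have hS : (0:ℝ) < Real.exp u0 + Real.exp u1 := by positivity
  unfold xent p1
  rw [Real.log_div (Real.exp_ne_zero _) (ne_of_gt hS), Real.log_exp]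
  ring

/-- derivative of the logsumexp-minus-logit loss when the two logits agree at `t`. -/
lemma hasDerivAt_loss {u0 u1 : ℝ → ℝ} {c0 c1 : ℝ} {t : ℝ}
    (h0 : HasDerivAt u0 c0 t) (h1 : HasDerivAt u1 c1 t) (heq : u0 t = u1 t) :
    HasDerivAt (fun s => Real.log (Real.exp (u0 s) + Real.exp (u1 s)))
      ((c0 + c1) / 2) t := by
  have hS : (0:ℝ) < Real.exp (u0 t) + Real.exp (u1 t) := by positivity
  have h := ((h0.exp.add h1.exp).log (ne_of_gt hS))
  convert h using 1
  · rfl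
  simp only [Pi.add_apply]
  rw [heq]
  field_simp
  ring

lemma hasDerivAt_xent10 {L M : ℕ} (hM : 1 ≤ M) (hL : M ≤ L) (ω : Fin M × Fin M → ℝ)
    (x : Fin L → Fin L → ℝ)
    (η0 η1 : EuclideanSpace ℝ (Fin (L - M + 1) × Fin (L - M + 1)))
    (q : Fin M × Fin M) (hx : ⟪η0 - η1, zbar hM hL ω x⟫_ℝ = 0) :
    HasDerivAt (fun s => xent 1 0 ⟪η0, zbar hM hL (Function.update ω q s) x⟫_ℝ
        ⟪η1, zbar hM hL (Function.update ω q s) x⟫_ℝ)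
      (((∑ l, η1 l * x (idx hL l.1 q.1) (idx hL l.2 q.2)) -
        ∑ l, η0 l * x (idx hL l.1 q.1) (idx hL l.2 q.2)) / 2) (ω q) := by
  have h0 := hasDerivAt_inner_zbar hM hL ω x η0 q (ω q)
  have h1 := hasDerivAt_inner_zbar hM hL ω x η1 q (ω q)
  have hupd : Function.update ω q (ω q) = ω := Function.update_eq_self q ω
  have heq : ⟪η0, zbar hM hL (Function.update ω q (ω q)) x⟫_ℝ
      = ⟪η1, zbar hM hL (Function.update ω q (ω q)) x⟫_ℝ := by
    rw [hupd]; rw [inner_sub_left] at hx; linarith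
  simp only [xent10]
  have h := (hasDerivAt_loss h0 h1 heq).sub h0
  exact h.congr_deriv (by ring)

lemma hasDerivAt_xent01 {L M : ℕ} (hM : 1 ≤ M) (hL : M ≤ L) (ω : Fin M × Fin M → ℝ)
    (x : Fin L → Fin L → ℝ)
    (η0 η1 : EuclideanSpace ℝ (Fin (L - M + 1) × Fin (L - M + 1)))
    (q : Fin M × Fin M) (hx : ⟪η0 - η1, zbar hM hL ω x⟫_ℝ = 0) :
    HasDerivAt (fun s => xent 0 1 ⟪η0, zbar hM hL (Function.update ω q s) x⟫_ℝ
        ⟪η1, zbar hM hL (Function.update ω q s) x⟫_ℝ)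
      (((∑ l, η0 l * x (idx hL l.1 q.1) (idx hL l.2 q.2)) -
        ∑ l, η1 l * x (idx hL l.1 q.1) (idx hL l.2 q.2)) / 2) (ω q) := by
  have h0 := hasDerivAt_inner_zbar hM hL ω x η0 q (ω q)
  have h1 := hasDerivAt_inner_zbar hM hL ω x η1 q (ω q)
  have hupd : Function.update ω q (ω q) = ω := Function.update_eq_self q ω
  have heq : ⟪η0, zbar hM hL (Function.update ω q (ω q)) x⟫_ℝ
      = ⟪η1, zbar hM hL (Function.update ω q (ω q)) x⟫_ℝ := by
    rw [hupd]; rw [inner_sub_left] at hx; linarith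
  simp only [xent01]
  have h := (hasDerivAt_loss h0 h1 heq).sub h1
  exact h.congr_deriv (by ring)

/-- Corrected form of Proposition 1, equation for the filter ω: if at the evaluation
point the two logits agree on every sample of both datasets (so the softmax output is
(1/2,1/2) on every sample), then for every filter entry (a,b),
∂(L_{D⁰} − L_{D¹})/∂ω_{ab} =
(1/(2K)) Σₖ Σ_{l₁,l₂} (η₀ − η₁)_{(l₁,l₂)} ((x¹₊ₖ − x⁰₊ₖ) + (x⁰₋ₖ − x¹₋ₖ))_{(l₁+a)(l₂+b)}. -/
theorem prop1_filter (L M K : ℕ) (hM : 1 ≤ M) (hL : M ≤ L)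
    (ω : Fin M × Fin M → ℝ)
    (x0p x0m x1p x1m : Fin K → Fin L → Fin L → ℝ)
    (η0 η1 : EuclideanSpace ℝ (Fin (L - M + 1) × Fin (L - M + 1)))
    (h0p : ∀ k, ⟪η0 - η1, zbar hM hL ω (x0p k)⟫_ℝ = 0)
    (h0m : ∀ k, ⟪η0 - η1, zbar hM hL ω (x0m k)⟫_ℝ = 0)
    (h1p : ∀ k, ⟪η0 - η1, zbar hM hL ω (x1p k)⟫_ℝ = 0)
    (h1m : ∀ k, ⟪η0 - η1, zbar hM hL ω (x1m k)⟫_ℝ = 0)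
    (a b : Fin M) :
    HasDerivAt
      (fun t : ℝ =>
        taskLoss hM hL (Function.update ω (a, b) t) x0p x0m η0 η1 -
          taskLoss hM hL (Function.update ω (a, b) t) x1p x1m η0 η1)
      ((1 / (2 * (K : ℝ))) * ∑ k : Fin K,
        ∑ l1 : Fin (L - M + 1), ∑ l2 : Fin (L - M + 1),
          (η0 - η1) (l1, l2) *
            ((x1p k (idx hL l1 a) (idx hL l2 b) - x0p k (idx hL l1 a) (idx hL l2 b)) +
             (x0m k (idx hL l1 a) (idx hL l2 b) - x1m k (idx hL l1 a) (idx hL l2 b))))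
      (ω (a, b)) := by
  classical
  set q : Fin M × Fin M := (a, b) with hq
  set S : EuclideanSpace ℝ (Fin (L - M + 1) × Fin (L - M + 1)) → (Fin L → Fin L → ℝ) → ℝ :=
    fun η x => ∑ l, η l * x (idx hL l.1 q.1) (idx hL l.2 q.2) with hS
  have hA : HasDerivAt
      (fun t : ℝ => taskLoss hM hL (Function.update ω q t) x0p x0m η0 η1)
      ((1 / (K : ℝ)) * ∑ k : Fin K,
        ((S η1 (x0p k) - S η0 (x0p k)) / 2 + (S η0 (x0m k) - S η1 (x0m k)) / 2)) (ω q) := by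
    simp only [taskLoss]
    exact (HasDerivAt.fun_sum fun k _ =>
      (hasDerivAt_xent10 hM hL ω (x0p k) η0 η1 q (h0p k)).add
        (hasDerivAt_xent01 hM hL ω (x0m k) η0 η1 q (h0m k))).const_mul _
  have hB : HasDerivAt
      (fun t : ℝ => taskLoss hM hL (Function.update ω q t) x1p x1m η0 η1)
      ((1 / (K : ℝ)) * ∑ k : Fin K,
        ((S η1 (x1p k) - S η0 (x1p k)) / 2 + (S η0 (x1m k) - S η1 (x1m k)) / 2)) (ω q) := by
    simp only [taskLoss]
    exact (HasDerivAt.fun_sum fun k _ =>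
      (hasDerivAt_xent10 hM hL ω (x1p k) η0 η1 q (h1p k)).add
        (hasDerivAt_xent01 hM hL ω (x1m k) η0 η1 q (h1m k))).const_mul _
  have h := hA.sub hB
  refine h.congr_deriv ?_
  have hk : ∀ k : Fin K,
      (∑ l1 : Fin (L - M + 1), ∑ l2 : Fin (L - M + 1),
        (η0 - η1) (l1, l2) *
          ((x1p k (idx hL l1 a) (idx hL l2 b) - x0p k (idx hL l1 a) (idx hL l2 b)) +
           (x0m k (idx hL l1 a) (idx hL l2 b) - x1m k (idx hL l1 a) (idx hL l2 b))))
      = 2 * (((S η1 (x0p k) - S η0 (x0p k)) / 2 + (S η0 (x0m k) - S η1 (x0m k)) / 2)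
          - ((S η1 (x1p k) - S η0 (x1p k)) / 2 + (S η0 (x1m k) - S η1 (x1m k)) / 2)) := by
    intro k
    simp only [hS, Fintype.sum_prod_type, hq, PiLp.sub_apply, sub_mul, mul_add, mul_sub,
      Finset.sum_add_distrib, Finset.sum_sub_distrib]
    ring
  rw [Finset.sum_congr rfl (fun k _ => hk k), ← Finset.mul_sum, ← mul_sub,
    ← Finset.sum_sub_distrib]
  ring
end

section
/- (Equation (22): the gradient difference is bounded by the task similarity.) Let D⁰ = {x⁰₊ₖ, x⁰₋ₖ}ₖ₌₁^K and D¹ = {x¹₊ₖ, x¹₋ₖ}ₖ₌₁^K be two K-shot task datasets and suppose η₀ = η₁. Then ‖∇_{η₀}(L_{D⁰} − L_{D¹})‖₂ ≤ L · ‖D_ω‖₂ · Sim(D⁰, D¹), where ‖D_ω‖₂ is the ℓ²→ℓ² operator norm of the matrix D_ω. In particular, the Euclidean norm of the difference of the η₀-gradients of the two task losses is bounded above by a constant multiple of the task similarity Sim(D⁰, D¹). -/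
open scoped InnerProductSpace

/-- The task similarity Sim(D⁰, D¹) = (1/(2K√N)) (‖Σₖ (x̄⁰₊ₖ − x̄¹₊ₖ)‖₂ + ‖Σₖ (x̄⁰₋ₖ − x̄¹₋ₖ)‖₂),
where N = L² is the length of the flattened images. -/
noncomputable def Sim {L K : ℕ} (x0p x0m x1p x1m : Fin K → Fin L → Fin L → ℝ) : ℝ :=
  (1 / (2 * (K : ℝ) * Real.sqrt ((L : ℝ) ^ 2))) *
    (‖∑ k : Fin K, (flat (x0p k) - flat (x1p k))‖ +
     ‖∑ k : Fin K, (flat (x0m k) - flat (x1m k))‖)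


/- Auxiliary lemmas -/

lemma p0_self' (t : ℝ) : p0 t t = 1/2 := by
  unfold p0
  have h := Real.exp_ne_zero t
  field_simp
  ring

lemma xent10_eq' (t c : ℝ) : xent 1 0 t c = Real.log (Real.exp t + Real.exp c) - t := by
  have hS : (0:ℝ) < Real.exp t + Real.exp c := by positivity
  unfold xent p0
  rw [Real.log_div (Real.exp_ne_zero t) (ne_of_gt hS), Real.log_exp]
  ring

lemma xent01_eq' (t c : ℝ) : xent 0 1 t c = Real.log (Real.exp t + Real.exp c) - c := by
  have hS : (0:ℝ) < Real.exp t + Real.exp c := by positivity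
  unfold xent p1
  rw [Real.log_div (Real.exp_ne_zero c) (ne_of_gt hS), Real.log_exp]
  ring

lemma hasDerivAt_logsum' (c t : ℝ) :
    HasDerivAt (fun s => Real.log (Real.exp s + Real.exp c)) (p0 t c) t := by
  have h1 : HasDerivAt (fun s : ℝ => Real.exp s + Real.exp c) (Real.exp t) t :=
    (Real.hasDerivAt_exp t).add_const _
  have h2 := h1.log (by positivity)
  simpa [p0] using h2

section auxE
variable {E : Type*} [NormedAddCommGroup E] [InnerProductSpace ℝ E]


lemma inner_right_hasFDerivAt' (z η : E) :
    HasFDerivAt (fun e : E => ⟪e, z⟫_ℝ) (innerSL ℝ z) η := by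
  have h : (fun e : E => ⟪e, z⟫_ℝ) = fun e => (innerSL ℝ z) e := by
    funext e; simp [real_inner_comm]
  rw [h]
  exact (innerSL ℝ z).hasFDerivAt

lemma hp_lemma' (z η : E) :
    HasFDerivAt (fun e : E => xent 1 0 ⟪e, z⟫_ℝ ⟪η, z⟫_ℝ)
      ((-(1/2) : ℝ) • innerSL ℝ z) η := by
  set c := ⟪η, z⟫_ℝ with hc
  have hd : HasDerivAt (fun s => xent 1 0 s c) (-(1/2) : ℝ) c := by
    have heq : (fun s => xent 1 0 s c) = fun s => Real.log (Real.exp s + Real.exp c) - s := by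
      funext s; exact xent10_eq' s c
    rw [heq]
    have h := (hasDerivAt_logsum' c c).sub (hasDerivAt_id c)
    rw [p0_self'] at h
    have e2 : (-(1/2) : ℝ) = 1/2 - 1 := by norm_num
    rw [e2]
    exact h
  exact hd.comp_hasFDerivAt η (inner_right_hasFDerivAt' z η)

lemma hm_lemma' (z η : E) :
    HasFDerivAt (fun e : E => xent 0 1 ⟪e, z⟫_ℝ ⟪η, z⟫_ℝ)
      (((1/2) : ℝ) • innerSL ℝ z) η := by
  set c := ⟪η, z⟫_ℝ with hc
  have hd : HasDerivAt (fun s => xent 0 1 s c) ((1/2) : ℝ) c := by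
    have heq : (fun s => xent 0 1 s c) = fun s => Real.log (Real.exp s + Real.exp c) - c := by
      funext s; exact xent01_eq' s c
    rw [heq]
    have h := (hasDerivAt_logsum' c c).sub_const c
    rwa [p0_self'] at h
  exact hd.comp_hasFDerivAt η (inner_right_hasFDerivAt' z η)

end auxE

set_option maxHeartbeats 1000000

/-- Equation (22): when η₀ = η₁, the norm of the difference of the η₀-gradients of the
two task losses is bounded by L · ‖D_ω‖₂ · Sim(D⁰, D¹), where ‖D_ω‖₂ is the ℓ²→ℓ²
operator norm of D_ω. -/
theorem grad_diff_le_sim (L M K : ℕ) (hM : 1 ≤ M) (hL : M ≤ L)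
    (ω : Fin M × Fin M → ℝ)
    (x0p x0m x1p x1m : Fin K → Fin L → Fin L → ℝ)
    (η0 η1 : EuclideanSpace ℝ (Fin (L - M + 1) × Fin (L - M + 1)))
    (h : η0 = η1) :
    ‖gradient (fun e : EuclideanSpace ℝ (Fin (L - M + 1) × Fin (L - M + 1)) =>
        taskLoss hM hL ω x0p x0m e η1 - taskLoss hM hL ω x1p x1m e η1) η0‖ ≤
      (L : ℝ) * ‖LinearMap.toContinuousLinearMap (Matrix.toEuclideanLin (Dmat hM hL ω))‖ *
        Sim x0p x0m x1p x1m := by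
  subst h
  set A := LinearMap.toContinuousLinearMap (Matrix.toEuclideanLin (Dmat hM hL ω)) with hA
  set z0p := fun k => zbar hM hL ω (x0p k) with hz0p
  set z0m := fun k => zbar hM hL ω (x0m k) with hz0m
  set z1p := fun k => zbar hM hL ω (x1p k) with hz1p
  set z1m := fun k => zbar hM hL ω (x1m k) with hz1m
  set w := ((1:ℝ)/(2*(K:ℝ))) •
      ((∑ k, z0m k - ∑ k, z1m k) - (∑ k, z0p k - ∑ k, z1p k)) with hw
  have hT : ∀ (xp xm : Fin K → Fin L → Fin L → ℝ),
      HasFDerivAt (fun e => taskLoss hM hL ω xp xm e η0)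
        ((1/(K:ℝ)) • ∑ k : Fin K,
          ((-(1/2) : ℝ) • innerSL ℝ (zbar hM hL ω (xp k)) +
           ((1/2) : ℝ) • innerSL ℝ (zbar hM hL ω (xm k)))) η0 := by
    intro xp xm
    have hs : HasFDerivAt
        (fun e => ∑ k : Fin K,
          (xent 1 0 ⟪e, zbar hM hL ω (xp k)⟫_ℝ ⟪η0, zbar hM hL ω (xp k)⟫_ℝ +
           xent 0 1 ⟪e, zbar hM hL ω (xm k)⟫_ℝ ⟪η0, zbar hM hL ω (xm k)⟫_ℝ))
        (∑ k : Fin K,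
          ((-(1/2) : ℝ) • innerSL ℝ (zbar hM hL ω (xp k)) +
           ((1/2) : ℝ) • innerSL ℝ (zbar hM hL ω (xm k)))) η0 :=
      HasFDerivAt.fun_sum fun k _ =>
        (hp_lemma' (zbar hM hL ω (xp k)) η0).add (hm_lemma' (zbar hM hL ω (xm k)) η0)
    simpa [taskLoss] using hs.const_mul (1/(K:ℝ))
  have hF := (hT x0p x0m).sub (hT x1p x1m)
  have hEq :
      ((1/(K:ℝ)) • ∑ k : Fin K,
          ((-(1/2) : ℝ) • innerSL ℝ (z0p k) + ((1/2) : ℝ) • innerSL ℝ (z0m k))) -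
      ((1/(K:ℝ)) • ∑ k : Fin K,
          ((-(1/2) : ℝ) • innerSL ℝ (z1p k) + ((1/2) : ℝ) • innerSL ℝ (z1m k))) =
      (InnerProductSpace.toDual ℝ _) w := by
    ext y
    simp only [ContinuousLinearMap.coe_sub', Pi.sub_apply, ContinuousLinearMap.coe_smul',
      Pi.smul_apply, ContinuousLinearMap.coe_sum', Finset.sum_apply,
      ContinuousLinearMap.add_apply, innerSL_apply_apply, smul_eq_mul,
      InnerProductSpace.toDual_apply_apply, hw, real_inner_smul_left, inner_sub_left, sum_inner]
    rw [Finset.sum_add_distrib, Finset.sum_add_distrib, ← Finset.mul_sum, ← Finset.mul_sum,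
      ← Finset.mul_sum, ← Finset.mul_sum]
    ring
  rw [hEq] at hF
  have hgrad : HasGradientAt (fun e =>
      taskLoss hM hL ω x0p x0m e η0 - taskLoss hM hL ω x1p x1m e η0) w η0 :=
    hasGradientAt_iff_hasFDerivAt.mpr hF
  rw [hgrad.gradient]
  set vp := ∑ k : Fin K, (flat (x0p k) - flat (x1p k)) with hvp
  set vm := ∑ k : Fin K, (flat (x0m k) - flat (x1m k)) with hvm
  have hSp : (∑ k, z0p k) - ∑ k, z1p k = A vp := by
    simp only [hvp, map_sum, map_sub, Finset.sum_sub_distrib]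
    rfl
  have hSm : (∑ k, z0m k) - ∑ k, z1m k = A vm := by
    simp only [hvm, map_sum, map_sub, Finset.sum_sub_distrib]
    rfl
  have hKnn : (0:ℝ) ≤ 1/(2*(K:ℝ)) := by positivity
  have hnorm : ‖w‖ ≤ (1/(2*(K:ℝ))) * (‖A‖ * ‖vm‖ + ‖A‖ * ‖vp‖) := by
    rw [hw, norm_smul, Real.norm_eq_abs, abs_of_nonneg hKnn]
    gcongr
    calc ‖(∑ k, z0m k - ∑ k, z1m k) - (∑ k, z0p k - ∑ k, z1p k)‖
        ≤ ‖(∑ k, z0m k) - ∑ k, z1m k‖ + ‖(∑ k, z0p k) - ∑ k, z1p k‖ := norm_sub_le _ _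
      _ ≤ ‖A‖ * ‖vm‖ + ‖A‖ * ‖vp‖ := by
          rw [hSp, hSm]; exact add_le_add (A.le_opNorm vm) (A.le_opNorm vp)
  have hL1 : (1:ℕ) ≤ L := le_trans hM hL
  have hL0 : ((L:ℝ)) ≠ 0 := by exact_mod_cast Nat.one_le_iff_ne_zero.mp hL1
  have hsqrt : Real.sqrt ((L : ℝ) ^ 2) = (L:ℝ) := Real.sqrt_sq (by positivity)
  have hRHS : (L : ℝ) * ‖A‖ * Sim x0p x0m x1p x1m
      = (1/(2*(K:ℝ))) * (‖A‖ * ‖vm‖ + ‖A‖ * ‖vp‖) := by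
    rw [Sim, hsqrt, ← hvp, ← hvm]
    have hc : ((L:ℝ)) * ((L:ℝ))⁻¹ = 1 := mul_inv_cancel₀ hL0
    field_simp
    ring
  rw [hRHS]
  exact hnorm
end
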